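/- Let H be a finite simple graph, n ≥ 3 odd, q ≥ 1, and let g : M_q(C_n) → H be a graph homomorphism. Then the map f : ZMod n → V(H) defined by f(i) = g((i,0)) is a graph homomorphism from C_n to H and satisfies σ₁(f) = 1 in 𝒢₁(H). -/

import Mathlib

/-- The type of arcs of a simple graph: ordered pairs of adjacent vertices. -/
abbrev Arc {V : Type} (H : SimpleGraph V) : Type := {p : V × V // H.Adj p.1 p.2}

/-- The relators `(a,b)(c,b)⁻¹(c,d)(a,d)⁻¹` over all 4-cycles `(a,b,c,d)` of `H`. -/
def relators1 {V : Type} (H : SimpleGraph V) : Set (FreeGroup (Arc H)) :=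
  {r | ∃ (a b c d : V) (hab : H.Adj a b) (hcb : H.Adj c b) (hcd : H.Adj c d) (had : H.Adj a d),
    r = FreeGroup.of ⟨(a, b), hab⟩ * (FreeGroup.of ⟨(c, b), hcb⟩)⁻¹ *
        FreeGroup.of ⟨(c, d), hcd⟩ * (FreeGroup.of ⟨(a, d), had⟩)⁻¹}

/-- The group `𝒢₁(H)`, presented by the arcs with the 4-cycle relators. -/
abbrev G1 {V : Type} (H : SimpleGraph V) := PresentedGroup (relators1 H)

/-- `f : ZMod n → V` is a homomorphism from the cycle `C_n` to `H`. -/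
def IsCycleHom {V : Type} (H : SimpleGraph V) (n : ℕ) (f : ZMod n → V) : Prop :=
  ∀ i : ZMod n, H.Adj (f i) (f (i + 1))

/-- The signature `σ₁(f) = ∏_{i=0}^{n-1} (f(2i),f(2i+1))·(f(2i+2),f(2i+1))⁻¹ ∈ 𝒢₁(H)`,
the product being taken from left to right. -/
def sig1 {V : Type} (H : SimpleGraph V) (n : ℕ) (f : ZMod n → V) (hf : IsCycleHom H n f) :
    G1 H :=
  ((List.range n).map (fun k =>
    PresentedGroup.of (rels := relators1 H)
        ⟨(f (2 * (k : ZMod n)), f (2 * (k : ZMod n) + 1)), hf _⟩ *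
    (PresentedGroup.of (rels := relators1 H)
        ⟨(f (2 * (k : ZMod n) + 1 + 1), f (2 * (k : ZMod n) + 1)), (hf _).symm⟩)⁻¹)).prod

/-- The cycle graph on `ZMod n` (`i` adjacent to `i ± 1`). -/
def cyc (n : ℕ) : SimpleGraph (ZMod n) := SimpleGraph.fromRel (fun i j => j = i + 1)

/-- Adjacency for the generalized Mycielskian. -/
def mycAdj {W : Type} (G : SimpleGraph W) (q : ℕ) :
    (W × Fin q) ⊕ Unit → (W × Fin q) ⊕ Unit → Prop
  | Sum.inl (u, i), Sum.inl (v, j) =>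
      G.Adj u v ∧ ((i : ℕ) + 1 = (j : ℕ) ∨ (j : ℕ) + 1 = (i : ℕ) ∨ ((i : ℕ) = 0 ∧ (j : ℕ) = 0))
  | Sum.inl (u, i), Sum.inr _ => (i : ℕ) = q - 1 ∧ ∃ v, G.Adj u v
  | Sum.inr _, Sum.inl (u, i) => (i : ℕ) = q - 1 ∧ ∃ v, G.Adj u v
  | Sum.inr _, Sum.inr _ => False

/-- The generalized Mycielskian `M_q(G)`: levels `0,…,q-1` of `G` plus an apex `*`. -/
def Myc {W : Type} (G : SimpleGraph W) (q : ℕ) : SimpleGraph ((W × Fin q) ⊕ Unit) where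
  Adj := mycAdj G q
  symm := by
    constructor
    rintro (⟨u, i⟩ | ⟨⟩) (⟨v, j⟩ | ⟨⟩) h <;> simp only [mycAdj] at h ⊢
    · exact ⟨h.1.symm, by tauto⟩
    · exact h
    · exact h
  loopless := by
    constructor
    rintro (⟨u, i⟩ | ⟨⟩) h <;> simp only [mycAdj] at h
    exact G.irrefl h.1


/-! ### Auxiliary group-theoretic lemmas -/

section Helpers
variable {G : Type*} [Group G]

private lemma tel_mid (x y : ℕ → G) (m : ℕ) :
    (((List.range m).map (fun k => x k * (y k)⁻¹)).prod) * x m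
      = x 0 * ((List.range m).map (fun k => (y k)⁻¹ * x (k + 1))).prod := by
  induction m with
  | zero => simp
  | succ m ih =>
      rw [List.range_succ]
      simp only [List.map_append, List.prod_append, List.map_cons, List.map_nil,
        List.prod_cons, List.prod_nil, mul_one]
      rw [← mul_assoc (x 0), ← ih]
      group

private lemma tel1 (c : ℕ → G) (m : ℕ) :
    ((List.range m).map (fun k => c k * (c (k + 1))⁻¹)).prod = c 0 * (c m)⁻¹ := by
  have h := tel_mid c (fun k => c (k + 1)) m
  simp only [inv_mul_cancel] at h
  simp only [List.prod_eq_one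
    (by simp : ∀ x ∈ (List.range m).map (fun _ => (1:G)), x = 1), mul_one] at h
  exact eq_mul_inv_of_mul_eq h

private lemma tel2 (c : ℕ → G) (m : ℕ) :
    ((List.range m).map (fun k => (c k)⁻¹ * c (k + 1))).prod = (c 0)⁻¹ * c m := by
  induction m with
  | zero => simp
  | succ m ih =>
      rw [List.range_succ]
      simp only [List.map_append, List.prod_append, List.map_cons, List.map_nil,
        List.prod_cons, List.prod_nil, mul_one, ih]
      group

private def PP {n : ℕ} (X Y : ZMod n → G) : G :=
  ((List.range n).map (fun k : ℕ => X (k : ZMod n) * (Y (k : ZMod n))⁻¹)).prod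

private lemma PP_eq {n : ℕ} (X Y : ZMod n → G) :
    PP X Y = X 0 *
      ((List.range n).map (fun k : ℕ => (Y (k : ZMod n))⁻¹ * X ((k : ZMod n) + 1))).prod
        * (X 0)⁻¹ := by
  have h := tel_mid (fun k : ℕ => X (k : ZMod n)) (fun k : ℕ => Y (k : ZMod n)) n
  simp only [Nat.cast_add, Nat.cast_one, Nat.cast_zero, ZMod.natCast_self] at h
  exact eq_mul_inv_of_mul_eq h

private lemma PP_congr {n : ℕ} (X Y X' Y' : ZMod n → G)
    (h : ∀ i : ZMod n, X i * (Y i)⁻¹ = X' i * (Y' i)⁻¹) : PP X Y = PP X' Y' := by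
  simp only [PP]
  exact congrArg _ (List.map_congr_left fun k _ => h _)

private lemma conj_step {n : ℕ} (X Y X' Y' : ZMod n → G)
    (h : ∀ i : ZMod n, (Y i)⁻¹ * X (i + 1) = (Y' i)⁻¹ * X' (i + 1)) :
    IsConj (PP X Y) (PP X' Y') := by
  rw [isConj_iff]
  refine ⟨X' 0 * (X 0)⁻¹, ?_⟩
  rw [PP_eq X Y, PP_eq X' Y']
  have hD : ((List.range n).map (fun k : ℕ => (Y (k:ZMod n))⁻¹ * X ((k:ZMod n) + 1))).prod
      = ((List.range n).map (fun k : ℕ => (Y' (k:ZMod n))⁻¹ * X' ((k:ZMod n) + 1))).prod :=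
    congrArg _ (List.map_congr_left fun k _ => h _)
  rw [hD]
  group

private lemma conj_tele {n : ℕ} (X Y C : ZMod n → G)
    (h : ∀ i : ZMod n, (Y i)⁻¹ * X (i + 1) = (C i)⁻¹ * C (i + 1)) :
    PP X Y = 1 := by
  rw [PP_eq]
  have hD : ((List.range n).map (fun k : ℕ => (Y (k:ZMod n))⁻¹ * X ((k:ZMod n) + 1))).prod
      = ((List.range n).map (fun k : ℕ => (C (k:ZMod n))⁻¹ * C ((k:ZMod n) + 1))).prod :=
    congrArg _ (List.map_congr_left fun k _ => h _)
  have h2 := tel2 (fun k : ℕ => C (k : ZMod n)) n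
  simp only [Nat.cast_add, Nat.cast_one, Nat.cast_zero, ZMod.natCast_self] at h2
  rw [hD, h2]
  group

private lemma term_tele {n : ℕ} (X Y C : ZMod n → G)
    (h : ∀ i : ZMod n, X i * (Y i)⁻¹ = C i * (C (i + 1))⁻¹) :
    PP X Y = 1 := by
  have h1 := tel1 (fun k : ℕ => C (k : ZMod n)) n
  simp only [Nat.cast_add, Nat.cast_one, Nat.cast_zero, ZMod.natCast_self] at h1
  rw [PP]
  have hD : ((List.range n).map (fun k : ℕ => X ((k : ℕ):ZMod n) * (Y (k:ZMod n))⁻¹)).prod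
      = ((List.range n).map (fun k : ℕ => C (k:ZMod n) * (C ((k:ZMod n) + 1))⁻¹)).prod :=
    congrArg _ (List.map_congr_left fun k _ => h _)
  rw [hD, h1]
  group

end Helpers

/-! ### Arc elements of `𝒢₁(H)` and the square relations -/

open Classical in
noncomputable def Earc {V : Type} (H : SimpleGraph V) (a b : V) : G1 H :=
  if h : H.Adj a b then PresentedGroup.of (rels := relators1 H) ⟨(a, b), h⟩ else 1

lemma Earc_of {V : Type} (H : SimpleGraph V) {a b : V} (h : H.Adj a b) :
    Earc H a b = PresentedGroup.of (rels := relators1 H) ⟨(a, b), h⟩ := by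
  rw [Earc, dif_pos h]

lemma Earc_rel {V : Type} (H : SimpleGraph V) {a b c d : V}
    (hab : H.Adj a b) (hcb : H.Adj c b) (hcd : H.Adj c d) (had : H.Adj a d) :
    Earc H a b * (Earc H c b)⁻¹ * Earc H c d * (Earc H a d)⁻¹ = 1 := by
  rw [Earc_of H hab, Earc_of H hcb, Earc_of H hcd, Earc_of H had]
  have hmem : (FreeGroup.of ⟨(a, b), hab⟩ * (FreeGroup.of ⟨(c, b), hcb⟩)⁻¹ *
      FreeGroup.of ⟨(c, d), hcd⟩ * (FreeGroup.of ⟨(a, d), had⟩)⁻¹ : FreeGroup (Arc H))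
      ∈ Subgroup.normalClosure (relators1 H) :=
    Subgroup.subset_normalClosure ⟨a, b, c, d, hab, hcb, hcd, had, rfl⟩
  have h1 := (QuotientGroup.eq_one_iff _).mpr hmem
  simp only [PresentedGroup.of, ← map_inv, ← map_mul]
  exact h1

lemma Earc_rel1 {V : Type} (H : SimpleGraph V) {a b c d : V}
    (hab : H.Adj a b) (hcb : H.Adj c b) (hcd : H.Adj c d) (had : H.Adj a d) :
    Earc H a b * (Earc H c b)⁻¹ = Earc H a d * (Earc H c d)⁻¹ := by
  have h := mul_inv_eq_one.mp (Earc_rel H hab hcb hcd had)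
  rw [← h]; group

lemma Earc_rel2 {V : Type} (H : SimpleGraph V) {a b c d : V}
    (hab : H.Adj a b) (hcb : H.Adj c b) (hcd : H.Adj c d) (had : H.Adj a d) :
    (Earc H c b)⁻¹ * Earc H c d = (Earc H a b)⁻¹ * Earc H a d := by
  have h := mul_inv_eq_one.mp (Earc_rel H hab hcb hcd had)
  rw [← h]; group

/-! ### The levels of the Mycielskian and their adjacencies -/

section MycL
variable {V : Type} {H : SimpleGraph V} {n q : ℕ}

private lemma myc_adj_iff {W : Type} (G : SimpleGraph W) (q : ℕ) (x y) :
    (Myc G q).Adj x y ↔ mycAdj G q x y := Iff.rfl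

private def Wlv (hq : 1 ≤ q) (g : Myc (cyc n) q →g H) (j : ℕ) (i : ZMod n) : V :=
  g (Sum.inl (i, ⟨min j (q - 1), by omega⟩))

private lemma zmod_ne_succ (h3 : 3 ≤ n) (i : ZMod n) : i ≠ i + 1 := by
  intro h
  have h1 : ((1 : ℕ) : ZMod n) = 0 := by
    have := left_eq_add.mp h
    exact_mod_cast this
  have h2 := Nat.le_of_dvd one_pos ((ZMod.natCast_eq_zero_iff _ _).mp h1)
  omega

private lemma cyc_adj (h3 : 3 ≤ n) (i i' : ZMod n) (h : i' = i + 1 ∨ i = i' + 1) :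
    (cyc n).Adj i i' := by
  rw [cyc, SimpleGraph.fromRel_adj]
  refine ⟨?_, h⟩
  rcases h with h | h
  · subst h; exact zmod_ne_succ h3 i
  · subst h; exact (zmod_ne_succ h3 i').symm

private lemma adjW (h3 : 3 ≤ n) (hq : 1 ≤ q) (g : Myc (cyc n) q →g H)
    {j j' : ℕ} (hj : j ≤ q - 1) (hj' : j' ≤ q - 1) (hjj : j' = j + 1 ∨ j = j' + 1)
    {i i' : ZMod n} (hii : i' = i + 1 ∨ i = i' + 1) :
    H.Adj (Wlv hq g j i) (Wlv hq g j' i') := by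
  apply g.map_adj
  rw [myc_adj_iff]
  refine ⟨cyc_adj h3 i i' hii, ?_⟩
  simp only [Fin.val_mk]
  omega

private lemma adjW0 (h3 : 3 ≤ n) (hq : 1 ≤ q) (g : Myc (cyc n) q →g H)
    {i i' : ZMod n} (hii : i' = i + 1 ∨ i = i' + 1) :
    H.Adj (Wlv hq g 0 i) (Wlv hq g 0 i') := by
  apply g.map_adj
  rw [myc_adj_iff]
  refine ⟨cyc_adj h3 i i' hii, ?_⟩
  simp only [Fin.val_mk]
  omega

private lemma adjWz (h3 : 3 ≤ n) (hq : 1 ≤ q) (g : Myc (cyc n) q →g H) (i : ZMod n) :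
    H.Adj (Wlv hq g (q - 1) i) (g (Sum.inr ())) := by
  apply g.map_adj
  rw [myc_adj_iff]
  refine ⟨?_, ⟨i + 1, cyc_adj h3 i (i + 1) (Or.inl rfl)⟩⟩
  simp only [Fin.val_mk]
  omega

end MycL

theorem base_of_mycielski_hom_has_trivial_sig1 {V : Type} [Fintype V] (H : SimpleGraph V)
    (n q : ℕ) (hodd : Odd n) (h3 : 3 ≤ n) (hq : 1 ≤ q) (g : Myc (cyc n) q →g H) :
    ∃ hf : IsCycleHom H n (fun i : ZMod n => g (Sum.inl (i, ⟨0, hq⟩))),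
      sig1 H n (fun i : ZMod n => g (Sum.inl (i, ⟨0, hq⟩))) hf = 1 := by
  classical
  set f : ZMod n → V := fun i : ZMod n => g (Sum.inl (i, ⟨0, hq⟩)) with hfdef
  set z : V := g (Sum.inr ()) with hzdef
  have hWf : ∀ i : ZMod n, Wlv hq g 0 i = f i := by
    intro i
    have hfin : (⟨min 0 (q - 1), by omega⟩ : Fin q) = ⟨0, hq⟩ := by ext; simp
    rw [Wlv, hfin]
  have hf : IsCycleHom H n f := by
    intro i
    rw [← hWf i, ← hWf (i + 1)]
    exact adjW0 h3 hq g (Or.inl rfl)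
  refine ⟨hf, ?_⟩
  have hsig : sig1 H n f hf
      = PP (fun i : ZMod n => Earc H (f (2*i)) (f (2*i+1)))
           (fun i : ZMod n => Earc H (f (2*i+1+1)) (f (2*i+1))) := by
    simp only [sig1, PP]
    rw [show (do let a ← List.range n; pure ((a : ℕ) : ZMod n) : List (ZMod n))
        = (List.range n).map (fun k : ℕ => (k : ZMod n)) from
      List.flatMap_pure_eq_map _ _, List.map_map]
    refine congrArg _ (List.map_congr_left fun k _ => ?_)
    simp only [Function.comp_apply]
    rw [Earc_of H (hf (2*(k:ZMod n))), Earc_of H ((hf (2*(k:ZMod n)+1)).symm)]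
  rcases (by omega : q = 1 ∨ 2 ≤ q) with hq1 | hq2
  · -- q = 1 : every base vertex is adjacent to the apex
    have hz : ∀ i : ZMod n, H.Adj (f i) z := by
      intro i
      have h := adjWz h3 hq g i
      rwa [show q - 1 = 0 from by omega, hWf] at h
    rw [hsig]
    apply term_tele _ _ (fun i : ZMod n => Earc H (f (2*i)) z)
    intro i
    rw [show (2:ZMod n)*(i+1) = 2*i+1+1 from by ring]
    exact Earc_rel1 H (hf (2*i)) ((hf (2*i+1)).symm) (hz (2*i+1+1)) (hz (2*i))
  · -- q ≥ 2
    have hbase : PP (fun i : ZMod n => Earc H (f (2*i)) (f (2*i+1)))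
        (fun i : ZMod n => Earc H (f (2*i+1+1)) (f (2*i+1)))
      = PP (fun i : ZMod n => Earc H (Wlv hq g 0 (2*i)) (Wlv hq g 1 (2*i+1)))
           (fun i : ZMod n => Earc H (Wlv hq g 0 (2*i+2)) (Wlv hq g 1 (2*i+1))) := by
      apply PP_congr
      intro i
      rw [show (2:ZMod n)*i+2 = 2*i+1+1 from by ring]
      rw [← hWf (2*i), ← hWf (2*i+1), ← hWf (2*i+1+1)]
      exact Earc_rel1 H (adjW0 h3 hq g (Or.inl rfl)) (adjW0 h3 hq g (Or.inr rfl))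
        (adjW h3 hq g (by omega) (by omega) (by omega) (Or.inr rfl))
        (adjW h3 hq g (by omega) (by omega) (by omega) (Or.inl rfl))
    have hstepQR : ∀ m : ℕ, 2*m+2 ≤ q-1 → ∀ i : ZMod n,
        (Earc H (Wlv hq g (2*m) (2*i+2)) (Wlv hq g (2*m+1) (2*i+1)))⁻¹ *
          Earc H (Wlv hq g (2*m) (2*(i+1))) (Wlv hq g (2*m+1) (2*(i+1)+1))
      = (Earc H (Wlv hq g (2*m+2) (2*i+2)) (Wlv hq g (2*m+1) (2*i+1)))⁻¹ *
          Earc H (Wlv hq g (2*m+2) (2*(i+1))) (Wlv hq g (2*m+1) (2*(i+1)+1)) := by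
      intro m hm i
      rw [show (2:ZMod n)*(i+1) = 2*i+2 from by ring]
      exact Earc_rel2 H
        (adjW h3 hq g (by omega) (by omega) (by omega) (Or.inr (by ring)))
        (adjW h3 hq g (by omega) (by omega) (by omega) (Or.inr (by ring)))
        (adjW h3 hq g (by omega) (by omega) (by omega) (Or.inl rfl))
        (adjW h3 hq g (by omega) (by omega) (by omega) (Or.inl rfl))
    have hchain : ∀ m : ℕ, 2*m+1 ≤ q-1 →
        IsConj (PP (fun i : ZMod n => Earc H (f (2*i)) (f (2*i+1)))
                   (fun i : ZMod n => Earc H (f (2*i+1+1)) (f (2*i+1))))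
          (PP (fun i : ZMod n => Earc H (Wlv hq g (2*m) (2*i)) (Wlv hq g (2*m+1) (2*i+1)))
              (fun i : ZMod n => Earc H (Wlv hq g (2*m) (2*i+2)) (Wlv hq g (2*m+1) (2*i+1)))) := by
      intro m
      induction m with
      | zero =>
          intro _
          simp only [Nat.mul_zero, Nat.zero_add]
          rw [hbase]
      | succ m ih =>
          intro hm
          refine (ih (by omega)).trans ?_
          have hstep := conj_step
            (fun i : ZMod n => Earc H (Wlv hq g (2*m) (2*i)) (Wlv hq g (2*m+1) (2*i+1)))
            (fun i : ZMod n => Earc H (Wlv hq g (2*m) (2*i+2)) (Wlv hq g (2*m+1) (2*i+1)))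
            (fun i : ZMod n => Earc H (Wlv hq g (2*m+2) (2*i)) (Wlv hq g (2*m+1) (2*i+1)))
            (fun i : ZMod n => Earc H (Wlv hq g (2*m+2) (2*i+2)) (Wlv hq g (2*m+1) (2*i+1)))
            (hstepQR m (by omega))
          have hRQ : PP
              (fun i : ZMod n => Earc H (Wlv hq g (2*m+2) (2*i)) (Wlv hq g (2*m+1) (2*i+1)))
              (fun i : ZMod n => Earc H (Wlv hq g (2*m+2) (2*i+2)) (Wlv hq g (2*m+1) (2*i+1)))
            = PP
              (fun i : ZMod n => Earc H (Wlv hq g (2*m+2) (2*i)) (Wlv hq g (2*m+3) (2*i+1)))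
              (fun i : ZMod n => Earc H (Wlv hq g (2*m+2) (2*i+2)) (Wlv hq g (2*m+3) (2*i+1))) := by
            apply PP_congr
            intro i
            exact Earc_rel1 H
              (adjW h3 hq g (by omega) (by omega) (by omega) (Or.inl rfl))
              (adjW h3 hq g (by omega) (by omega) (by omega) (Or.inr (by ring)))
              (adjW h3 hq g (by omega) (by omega) (by omega) (Or.inr (by ring)))
              (adjW h3 hq g (by omega) (by omega) (by omega) (Or.inl rfl))
          rw [hRQ] at hstep
          rw [show 2*(m+1) = 2*m+2 from by ring, show 2*m+2+1 = 2*m+3 from by omega]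
          exact hstep
    rcases Nat.even_or_odd q with hqe | hqo
    · -- q even : q = 2*m+2, finish from Q(q-2) through the apex
      obtain ⟨m, hmq⟩ : ∃ m, q = 2*m+2 := by
        rcases hqe with ⟨t, ht⟩; exact ⟨t - 1, by omega⟩
      have hconj := hchain m (by omega)
      have hzadj : ∀ i : ZMod n, H.Adj (Wlv hq g (2*m+1) i) z := by
        intro i
        have h := adjWz h3 hq g i
        rwa [show q - 1 = 2*m+1 from by omega] at h
      have hone : PP
          (fun i : ZMod n => Earc H (Wlv hq g (2*m) (2*i)) (Wlv hq g (2*m+1) (2*i+1)))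
          (fun i : ZMod n => Earc H (Wlv hq g (2*m) (2*i+2)) (Wlv hq g (2*m+1) (2*i+1))) = 1 := by
        apply conj_tele _ _ (fun i : ZMod n => Earc H z (Wlv hq g (2*m+1) (2*i+1)))
        intro i
        rw [show (2:ZMod n)*(i+1) = 2*i+2 from by ring]
        exact Earc_rel2 H
          ((hzadj (2*i+1)).symm)
          (adjW h3 hq g (by omega) (by omega) (by omega) (Or.inr (by ring)))
          (adjW h3 hq g (by omega) (by omega) (by omega) (Or.inl rfl))
          ((hzadj (2*i+2+1)).symm)
      rw [hone] at hconj
      rw [hsig]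
      rcases isConj_iff.mp hconj with ⟨c, hc⟩
      calc PP (fun i : ZMod n => Earc H (f (2*i)) (f (2*i+1)))
              (fun i : ZMod n => Earc H (f (2*i+1+1)) (f (2*i+1)))
          = c⁻¹ * (c * PP (fun i : ZMod n => Earc H (f (2*i)) (f (2*i+1)))
              (fun i : ZMod n => Earc H (f (2*i+1+1)) (f (2*i+1))) * c⁻¹) * c := by group
        _ = c⁻¹ * 1 * c := by rw [hc]
        _ = 1 := by group
    · -- q odd : q = 2*m+3, one more conjugation step, then finish through the apex
      obtain ⟨m, hmq⟩ : ∃ m, q = 2*m+3 := by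
        rcases hqo with ⟨t, ht⟩; exact ⟨t - 1, by omega⟩
      have hconj := hchain m (by omega)
      have hstep := conj_step
        (fun i : ZMod n => Earc H (Wlv hq g (2*m) (2*i)) (Wlv hq g (2*m+1) (2*i+1)))
        (fun i : ZMod n => Earc H (Wlv hq g (2*m) (2*i+2)) (Wlv hq g (2*m+1) (2*i+1)))
        (fun i : ZMod n => Earc H (Wlv hq g (2*m+2) (2*i)) (Wlv hq g (2*m+1) (2*i+1)))
        (fun i : ZMod n => Earc H (Wlv hq g (2*m+2) (2*i+2)) (Wlv hq g (2*m+1) (2*i+1)))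
        (hstepQR m (by omega))
      have hconj2 := hconj.trans hstep
      have hzadj : ∀ i : ZMod n, H.Adj (Wlv hq g (2*m+2) i) z := by
        intro i
        have h := adjWz h3 hq g i
        rwa [show q - 1 = 2*m+2 from by omega] at h
      have hone : PP
          (fun i : ZMod n => Earc H (Wlv hq g (2*m+2) (2*i)) (Wlv hq g (2*m+1) (2*i+1)))
          (fun i : ZMod n => Earc H (Wlv hq g (2*m+2) (2*i+2)) (Wlv hq g (2*m+1) (2*i+1))) = 1 := by
        apply term_tele _ _ (fun i : ZMod n => Earc H (Wlv hq g (2*m+2) (2*i)) z)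
        intro i
        rw [show (2:ZMod n)*(i+1) = 2*i+2 from by ring]
        exact Earc_rel1 H
          (adjW h3 hq g (by omega) (by omega) (by omega) (Or.inl rfl))
          (adjW h3 hq g (by omega) (by omega) (by omega) (Or.inr (by ring)))
          (hzadj (2*i+2))
          (hzadj (2*i))
      rw [hone] at hconj2
      rw [hsig]
      rcases isConj_iff.mp hconj2 with ⟨c, hc⟩
      calc PP (fun i : ZMod n => Earc H (f (2*i)) (f (2*i+1)))
              (fun i : ZMod n => Earc H (f (2*i+1+1)) (f (2*i+1)))
          = c⁻¹ * (c * PP (fun i : ZMod n => Earc H (f (2*i)) (f (2*i+1)))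
              (fun i : ZMod n => Earc H (f (2*i+1+1)) (f (2*i+1))) * c⁻¹) * c := by group
        _ = c⁻¹ * 1 * c := by rw [hc]
        _ = 1 := by group
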